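/- If 0 ≤ β ≤ 2, then w = 1/2 is the unique solution in [0,1] of the fixed-point equation w = 1/(1 + exp(β − 2βw)). -/

import Mathlib

private lemma key_slope (β a b : ℝ) (hβ : 0 < β) (hβ2 : β ≤ 2) (hab : a < b)
    (hmid : ∀ c, a < c → c < b → β - 2 * β * c ≠ 0) :
    1 / (1 + Real.exp (β - 2 * β * b)) - 1 / (1 + Real.exp (β - 2 * β * a)) < b - a := by
  set f : ℝ → ℝ := fun x => (1 + Real.exp (β - 2 * β * x))⁻¹ with hf
  have hpos : ∀ x : ℝ, 0 < 1 + Real.exp (β - 2 * β * x) := fun x => by positivity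
  have hderiv : ∀ x : ℝ, HasDerivAt f
      (2 * β * Real.exp (β - 2 * β * x) / (1 + Real.exp (β - 2 * β * x)) ^ 2) x := by
    intro x
    have h1 : HasDerivAt (fun x : ℝ => β - 2 * β * x) (-(2 * β)) x := by
      simpa using ((hasDerivAt_id x).const_mul (2 * β)).const_sub β
    have h2 : HasDerivAt (fun x : ℝ => Real.exp (β - 2 * β * x))
        (Real.exp (β - 2 * β * x) * (-(2 * β))) x := h1.exp
    have h3 : HasDerivAt (fun x : ℝ => 1 + Real.exp (β - 2 * β * x))
        (Real.exp (β - 2 * β * x) * (-(2 * β))) x := h2.const_add 1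
    have h4 := h3.inv (ne_of_gt (hpos x))
    exact h4.congr_deriv (by ring)
  have hcont : ContinuousOn f (Set.Icc a b) :=
    fun x _ => ((hderiv x).continuousAt).continuousWithinAt
  obtain ⟨c, hc, hslope⟩ := exists_hasDerivAt_eq_slope f
    (fun x => 2 * β * Real.exp (β - 2 * β * x) / (1 + Real.exp (β - 2 * β * x)) ^ 2)
    hab hcont (fun x _ => hderiv x)
  set e := Real.exp (β - 2 * β * c) with he
  have he0 : 0 < e := Real.exp_pos _
  have he1 : e ≠ 1 := by
    intro h
    exact hmid c hc.1 hc.2 ((Real.exp_eq_one_iff _).mp h)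
  have hlt : 2 * β * e / (1 + e) ^ 2 < 1 := by
    rw [div_lt_one (by positivity)]
    have h1 : 1 - e ≠ 0 := sub_ne_zero.mpr (Ne.symm he1)
    have h2 : 0 < (1 - e) ^ 2 := by positivity
    nlinarith
  rw [hslope] at hlt
  have hba : 0 < b - a := by linarith
  rw [div_lt_one hba] at hlt
  simpa [hf, one_div] using hlt

/-- If `0 ≤ β ≤ 2`, then `w = 1/2` is the unique solution in `[0,1]` of the
fixed-point equation `w = 1/(1 + exp(β − 2βw))`. -/
theorem fixed_point_unique_of_beta_le_two (β : ℝ) (h0 : 0 ≤ β) (h2 : β ≤ 2) :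
    ∀ w ∈ Set.Icc (0:ℝ) 1,
      (w = 1 / (1 + Real.exp (β - 2 * β * w)) ↔ w = 1/2) := by
  intro w _hw
  constructor
  · intro heq
    rcases eq_or_lt_of_le h0 with hβ0 | hβ
    · -- β = 0
      rw [← hβ0] at heq
      norm_num [Real.exp_zero] at heq
      linarith
    · rcases lt_trichotomy w (1/2 : ℝ) with hlt | heqw | hgt
      · exfalso
        have hkey := key_slope β w (1/2) hβ h2 hlt (by
          intro c hc1 hc2 h
          nlinarith)
        have hb : β - 2 * β * (1/2 : ℝ) = 0 := by ring
        rw [hb, Real.exp_zero] at hkey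
        rw [← heq] at hkey
        norm_num at hkey
      · exact heqw
      · exfalso
        have hkey := key_slope β (1/2) w hβ h2 hgt (by
          intro c hc1 hc2 h
          nlinarith)
        have hb : β - 2 * β * (1/2 : ℝ) = 0 := by ring
        rw [hb, Real.exp_zero] at hkey
        rw [← heq] at hkey
        norm_num at hkey
  · intro h
    subst h
    have hb : β - 2 * β * (1/2 : ℝ) = 0 := by ring
    rw [hb, Real.exp_zero]
    norm_num
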